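/- For ϑ > 0, with Z = (e^ϑ − 1)/ϑ, the inequality 1 − Z + Z·log Z ≤ ϑ²·e^ϑ/8 holds. -/

import Mathlib

open Real

theorem sep_uniform_quadratic_bound (ϑ : ℝ) (hϑ : 0 < ϑ) (Z : ℝ)
    (hZ : Z = (exp ϑ - 1) / ϑ) :
    1 - Z + Z * Real.log Z ≤ ϑ ^ 2 * exp ϑ / 8 := by
  have hZpos : 0 < Z := by
    have h1 : (1:ℝ) < exp ϑ := by
      rw [← Real.exp_zero]; exact Real.exp_lt_exp.mpr hϑ
    rw [hZ]
    have : 0 < exp ϑ - 1 := by linarith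
    positivity
  -- Z ≥ 1
  have hZ1 : 1 ≤ Z := by
    rw [hZ, le_div_iff₀ hϑ]
    nlinarith [Real.add_one_le_exp ϑ]
  -- Z ≤ exp ϑ
  have hZe : Z ≤ exp ϑ := by
    have h2 : rexp (-ϑ) * rexp ϑ = 1 := by rw [← Real.exp_add]; simp
    have h3 : (1 - ϑ) * rexp ϑ ≤ 1 := by
      nlinarith [Real.add_one_le_exp (-ϑ), Real.exp_pos ϑ]
    rw [hZ, div_le_iff₀ hϑ]
    nlinarith
  set x : ℝ := Real.log Z with hx
  have hx0 : 0 ≤ x := Real.log_nonneg hZ1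
  have hxϑ : x ≤ ϑ := by
    calc x ≤ Real.log (exp ϑ) := Real.log_le_log (by positivity) hZe
    _ = ϑ := Real.log_exp ϑ
  have hex : exp x = Z := Real.exp_log hZpos
  -- define h
  set h : ℝ → ℝ := fun t => Real.exp ϑ * t ^ 2 / 2 + (Z - Real.exp ϑ * ϑ / 2) * t + 1 - Real.exp t with hh
  set h' : ℝ → ℝ := fun t => Real.exp ϑ * t + (Z - Real.exp ϑ * ϑ / 2) - Real.exp t with hh'
  have hd : ∀ t, HasDerivAt h (h' t) t := by
    intro t
    have h1 : HasDerivAt (fun t : ℝ => Real.exp ϑ * t ^ 2 / 2) (Real.exp ϑ * t) t := by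
      have := ((hasDerivAt_pow 2 t).const_mul (Real.exp ϑ)).div_const 2
      simpa using this.congr_deriv (by ring)
    have h2 : HasDerivAt (fun t : ℝ => (Z - Real.exp ϑ * ϑ / 2) * t)
        (Z - Real.exp ϑ * ϑ / 2) t := by
      simpa using (hasDerivAt_id t).const_mul (Z - Real.exp ϑ * ϑ / 2)
    have h3 := Real.hasDerivAt_exp t
    exact ((h1.add h2).add_const 1).sub h3
  have hd' : ∀ t, HasDerivAt h' (Real.exp ϑ - Real.exp t) t := by
    intro t
    have h1 : HasDerivAt (fun t : ℝ => Real.exp ϑ * t) (Real.exp ϑ) t := by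
      simpa using (hasDerivAt_id t).const_mul (Real.exp ϑ)
    exact ((h1.add_const (Z - Real.exp ϑ * ϑ / 2)).sub (Real.hasDerivAt_exp t))
  have hderiv : deriv h = h' := funext fun t => (hd t).deriv
  have hconv : ConvexOn ℝ (Set.Icc 0 ϑ) h := by
    apply convexOn_of_deriv2_nonneg (convex_Icc 0 ϑ)
    · exact fun t _ => (hd t).continuousAt.continuousWithinAt
    · exact fun t _ => (hd t).differentiableAt.differentiableWithinAt
    · rw [hderiv]
      exact fun t _ => (hd' t).differentiableAt.differentiableWithinAt
    · intro t ht
      rw [Function.iterate_succ, Function.iterate_one, Function.comp_apply, hderiv,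
        (hd' t).deriv]
      rw [interior_Icc] at ht
      have := Real.exp_le_exp.mpr (le_of_lt ht.2)
      linarith
  have hmem : x ∈ Set.Icc (0:ℝ) ϑ := ⟨hx0, hxϑ⟩
  have hseg : x ∈ segment ℝ (0:ℝ) ϑ := by
    rw [segment_eq_Icc hϑ.le]; exact hmem
  have hle := hconv.le_on_segment (Set.left_mem_Icc.mpr hϑ.le)
    (Set.right_mem_Icc.mpr hϑ.le) hseg
  have h0 : h 0 = 0 := by simp [hh]
  have hϑ0 : h ϑ = 0 := by
    have : Z * ϑ = Real.exp ϑ - 1 := by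
      rw [hZ]; field_simp
    simp only [hh]
    nlinarith [this]
  rw [h0, hϑ0] at hle
  have hle' : h x ≤ 0 := le_trans hle (by simp)
  have key : 1 + Z * x - Z ≤ Real.exp ϑ * (ϑ * x - x ^ 2) / 2 := by
    simp only [hh] at hle'
    rw [hex] at hle'
    nlinarith
  have hquad : ϑ * x - x ^ 2 ≤ ϑ ^ 2 / 4 := by nlinarith [sq_nonneg (ϑ - 2*x)]
  have := Real.exp_pos ϑ
  nlinarith [key, hquad]
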